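/- Let L be the subgroup of GL₄(ℚ) generated by the four matrices D₁, D₂, M, E. Then L is isomorphic to the semidirect product V ⋊ S₄, where V = { v : Fin 4 → ZMod 2 | v 0 + v 1 + v 2 + v 3 = 0 } ≅ (ℤ/2)³ and S₄ = Equiv.Perm (Fin 4) acts on V by permuting coordinates. That is, the full group of logical operators of the toric code generated by Dehn twists and anyon loops is isomorphic to S₄ ⋉ (ℤ/2)³. -/

import Mathlib

/-- First Dehn twist operator on the toric-code ground space (skein basis). -/
def dehn₁ : Matrix (Fin 4) (Fin 4) ℚ := !![1,0,0,0; 0,1,0,0; 0,0,0,1; 0,0,1,0]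

/-- Second Dehn twist operator. -/
def dehn₂ : Matrix (Fin 4) (Fin 4) ℚ := !![1,0,0,0; 0,0,1,0; 0,1,0,0; 0,0,0,1]

/-- Horizontal `m`-anyon loop operator. -/
def mLoop : Matrix (Fin 4) (Fin 4) ℚ := !![0,1,0,0; 1,0,0,0; 0,0,0,1; 0,0,1,0]

/-- Horizontal `e`-anyon loop operator. -/
def eLoop : Matrix (Fin 4) (Fin 4) ℚ := !![1,0,0,0; 0,1,0,0; 0,0,-1,0; 0,0,0,-1]

lemma dehn₁_sq : dehn₁ * dehn₁ = 1 := by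
  ext i j
  fin_cases i <;> fin_cases j <;>
    simp [dehn₁, Matrix.mul_apply, Fin.sum_univ_four, Matrix.one_apply,
      Matrix.vecHead, Matrix.vecTail, Fin.ext_iff]

lemma dehn₂_sq : dehn₂ * dehn₂ = 1 := by
  ext i j
  fin_cases i <;> fin_cases j <;>
    simp [dehn₂, Matrix.mul_apply, Fin.sum_univ_four, Matrix.one_apply,
      Matrix.vecHead, Matrix.vecTail, Fin.ext_iff]

lemma mLoop_sq : mLoop * mLoop = 1 := by
  ext i j
  fin_cases i <;> fin_cases j <;>
    simp [mLoop, Matrix.mul_apply, Fin.sum_univ_four, Matrix.one_apply,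
      Matrix.vecHead, Matrix.vecTail, Fin.ext_iff]

lemma eLoop_sq : eLoop * eLoop = 1 := by
  ext i j
  fin_cases i <;> fin_cases j <;>
    simp [eLoop, Matrix.mul_apply, Fin.sum_univ_four, Matrix.one_apply,
      Matrix.vecHead, Matrix.vecTail, Fin.ext_iff]

/-- `D₁` as an element of `GL₄(ℚ)`. -/
def D₁ : GL (Fin 4) ℚ := ⟨dehn₁, dehn₁, dehn₁_sq, dehn₁_sq⟩

/-- `D₂` as an element of `GL₄(ℚ)`. -/
def D₂ : GL (Fin 4) ℚ := ⟨dehn₂, dehn₂, dehn₂_sq, dehn₂_sq⟩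

/-- `M` as an element of `GL₄(ℚ)`. -/
def M : GL (Fin 4) ℚ := ⟨mLoop, mLoop, mLoop_sq, mLoop_sq⟩

/-- `E` as an element of `GL₄(ℚ)`. -/
def E : GL (Fin 4) ℚ := ⟨eLoop, eLoop, eLoop_sq, eLoop_sq⟩

/-- The subgroup of `GL₄(ℚ)` generated by the two Dehn twists and the two anyon loops. -/
def L : Subgroup (GL (Fin 4) ℚ) := Subgroup.closure {D₁, D₂, M, E}

/-- The parity-zero subgroup `V = {v : Fin 4 → ZMod 2 | v 0 + v 1 + v 2 + v 3 = 0} ≅ (ℤ/2)³`. -/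
abbrev V := {v : Fin 4 → ZMod 2 // v 0 + v 1 + v 2 + v 3 = 0}

def sgn (a : ZMod 2) : ℚ := if a = 0 then 1 else -1

lemma sgn_add (a b : ZMod 2) : sgn (a + b) = sgn a * sgn b := by
  fin_cases a <;> fin_cases b <;>
    norm_num [sgn, show ((1 : ZMod 2) + 1) = 0 from rfl] <;> decide

lemma sgn_ne_zero (a : ZMod 2) : sgn a ≠ 0 := by
  fin_cases a <;> norm_num [sgn] <;> decide

lemma sgn_inj {a b : ZMod 2} (h : sgn a = sgn b) : a = b := by
  revert a b; decide

def matOf (v : Fin 4 → ZMod 2) (σ : Equiv.Perm (Fin 4)) : Matrix (Fin 4) (Fin 4) ℚ :=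
  Matrix.of fun i j => if σ j = i then sgn (v i) else 0

lemma matOf_mul (v w : Fin 4 → ZMod 2) (σ τ : Equiv.Perm (Fin 4)) :
    matOf v σ * matOf w τ = matOf (v + fun i => w (σ⁻¹ i)) (σ * τ) := by
  ext i j
  rw [Matrix.mul_apply, Finset.sum_eq_single (τ j)]
  · simp only [matOf, Matrix.of_apply, Equiv.Perm.mul_apply, Pi.add_apply, if_pos rfl, if_true]
    by_cases h : σ (τ j) = i
    · rw [if_pos h]; change _ = if (σ * τ) j = i then _ else _
      rw [if_pos (show (σ * τ) j = i from h), sgn_add]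
      have h2 : σ⁻¹ i = τ j := by rw [← h, Equiv.Perm.coe_inv, Equiv.symm_apply_apply]
      rw [h2]
    · rw [if_neg h]; change _ = if (σ * τ) j = i then _ else _
      rw [if_neg (show ¬(σ * τ) j = i from h), zero_mul]
  · intro k _ hk
    simp [matOf, if_neg (fun h : τ j = k => hk h.symm)]
  · simp

lemma matOf_one : matOf 0 1 = 1 := by
  ext i j
  simp [matOf, Matrix.one_apply, sgn, eq_comm]

lemma add_self_zero (v : Fin 4 → ZMod 2) : v + v = 0 := by
  funext i; simp [Pi.add_apply, CharTwo.add_self_eq_zero]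

lemma matOf_mul_inv (v : Fin 4 → ZMod 2) (σ : Equiv.Perm (Fin 4)) :
    matOf v σ * matOf (fun i => v (σ i)) σ⁻¹ = 1 := by
  rw [matOf_mul]
  have h1 : (v + fun i => v (σ (σ⁻¹ i))) = 0 := by
    simpa using add_self_zero v
  rw [h1, mul_inv_cancel, matOf_one]

lemma matOf_inv_mul (v : Fin 4 → ZMod 2) (σ : Equiv.Perm (Fin 4)) :
    matOf (fun i => v (σ i)) σ⁻¹ * matOf v σ = 1 := by
  rw [matOf_mul]
  have h1 : ((fun i => v (σ i)) + fun i => v (σ⁻¹⁻¹ i)) = 0 := by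
    simpa using add_self_zero (fun i => v (σ i))
  rw [h1, inv_mul_cancel, matOf_one]

def F (v : Fin 4 → ZMod 2) (σ : Equiv.Perm (Fin 4)) : GL (Fin 4) ℚ :=
  ⟨matOf v σ, matOf (fun i => v (σ i)) σ⁻¹, matOf_mul_inv v σ, matOf_inv_mul v σ⟩

lemma F_mul (v w : Fin 4 → ZMod 2) (σ τ : Equiv.Perm (Fin 4)) :
    F v σ * F w τ = F (v + fun i => w (σ⁻¹ i)) (σ * τ) :=
  Units.ext (matOf_mul v w σ τ)

lemma F_one : F 0 1 = 1 := Units.ext matOf_one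

lemma F_inv (v : Fin 4 → ZMod 2) (σ : Equiv.Perm (Fin 4)) :
    (F v σ)⁻¹ = F (fun i => v (σ i)) σ⁻¹ := Units.ext rfl

lemma F_inj {v w : Fin 4 → ZMod 2} {σ τ : Equiv.Perm (Fin 4)}
    (h : F v σ = F w τ) : v = w ∧ σ = τ := by
  have hm : matOf v σ = matOf w τ := congrArg Units.val h
  have hσ : σ = τ := by
    refine Equiv.ext fun j => ?_
    have := congrFun (congrFun (congrArg (fun m => (m : Matrix (Fin 4) (Fin 4) ℚ)) hm) (σ j)) j
    simp only [matOf, Matrix.of_apply, if_pos rfl] at this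
    by_cases hc : τ j = σ j
    · exact hc.symm
    · rw [if_neg hc] at this
      exact absurd this (sgn_ne_zero _)
  refine ⟨funext fun i => ?_, hσ⟩
  have := congrFun (congrFun (congrArg (fun m => (m : Matrix (Fin 4) (Fin 4) ℚ)) hm) i) (σ⁻¹ i)
  rw [← hσ] at this
  simp only [matOf, Matrix.of_apply, Equiv.Perm.coe_inv, Equiv.apply_symm_apply, if_pos rfl] at this
  exact sgn_inj this

-- generator identities
lemma F_D₁ : F 0 (Equiv.swap 2 3) = D₁ := by
  refine Units.ext ?_
  show matOf 0 (Equiv.swap 2 3) = dehn₁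
  ext i j
  fin_cases i <;> fin_cases j <;>
    simp [matOf, dehn₁, sgn, Equiv.swap_apply_def] <;> decide

lemma F_D₂ : F 0 (Equiv.swap 1 2) = D₂ := by
  refine Units.ext ?_
  show matOf 0 (Equiv.swap 1 2) = dehn₂
  ext i j
  fin_cases i <;> fin_cases j <;>
    simp [matOf, dehn₂, sgn, Equiv.swap_apply_def] <;> decide

lemma F_M : F 0 (Equiv.swap 0 1 * Equiv.swap 2 3) = M := by
  refine Units.ext ?_
  show matOf 0 (Equiv.swap 0 1 * Equiv.swap 2 3) = mLoop
  ext i j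
  fin_cases i <;> fin_cases j <;>
    simp [matOf, mLoop, sgn, Equiv.swap_apply_def] <;> decide

lemma F_E : F ![0,0,1,1] 1 = E := by
  refine Units.ext ?_
  show matOf ![0,0,1,1] 1 = eLoop
  ext i j
  fin_cases i <;> fin_cases j <;>
    simp [matOf, eLoop, sgn] <;> decide

def φ : Equiv.Perm (Fin 4) →* GL (Fin 4) ℚ where
  toFun σ := F 0 σ
  map_one' := F_one
  map_mul' σ τ := by rw [F_mul]; norm_num; rfl

def S : Subgroup (Equiv.Perm (Fin 4)) := L.comap φ

lemma hD₁L : D₁ ∈ L := Subgroup.subset_closure (by simp)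
lemma hD₂L : D₂ ∈ L := Subgroup.subset_closure (by simp)
lemma hML : M ∈ L := Subgroup.subset_closure (by simp)
lemma hEL : E ∈ L := Subgroup.subset_closure (by simp)

lemma perm_mem (σ : Equiv.Perm (Fin 4)) : F 0 σ ∈ L := by
  suffices h : S = ⊤ by
    have : σ ∈ S := h ▸ Subgroup.mem_top σ
    exact this
  rw [eq_top_iff, ← Equiv.Perm.closure_isSwap, Subgroup.closure_le]
  have h23 : Equiv.swap (2 : Fin 4) 3 ∈ S := by
    show φ _ ∈ L; show F 0 _ ∈ L; rw [F_D₁]; exact hD₁L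
  have h12 : Equiv.swap (1 : Fin 4) 2 ∈ S := by
    show φ _ ∈ L; show F 0 _ ∈ L; rw [F_D₂]; exact hD₂L
  have hM' : Equiv.swap (0 : Fin 4) 1 * Equiv.swap 2 3 ∈ S := by
    show φ _ ∈ L; show F 0 _ ∈ L; rw [F_M]; exact hML
  have h01 : Equiv.swap (0 : Fin 4) 1 ∈ S := by
    have := S.mul_mem hM' h23
    rwa [show Equiv.swap (0:Fin 4) 1 * Equiv.swap 2 3 * Equiv.swap 2 3
        = Equiv.swap 0 1 from by decide] at this
  have h02 : Equiv.swap (0 : Fin 4) 2 ∈ S := by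
    have := S.mul_mem (S.mul_mem h01 h12) h01
    rwa [show Equiv.swap (0:Fin 4) 1 * Equiv.swap 1 2 * Equiv.swap 0 1
        = Equiv.swap 0 2 from by decide] at this
  have h13 : Equiv.swap (1 : Fin 4) 3 ∈ S := by
    have := S.mul_mem (S.mul_mem h12 h23) h12
    rwa [show Equiv.swap (1:Fin 4) 2 * Equiv.swap 2 3 * Equiv.swap 1 2
        = Equiv.swap 1 3 from by decide] at this
  have h03 : Equiv.swap (0 : Fin 4) 3 ∈ S := by
    have := S.mul_mem (S.mul_mem h01 h13) h01
    rwa [show Equiv.swap (0:Fin 4) 1 * Equiv.swap 1 3 * Equiv.swap 0 1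
        = Equiv.swap 0 3 from by decide] at this
  have h10 : Equiv.swap (1 : Fin 4) 0 ∈ S := by rwa [Equiv.swap_comm]
  have h20 : Equiv.swap (2 : Fin 4) 0 ∈ S := by rwa [Equiv.swap_comm]
  have h30 : Equiv.swap (3 : Fin 4) 0 ∈ S := by rwa [Equiv.swap_comm]
  have h21 : Equiv.swap (2 : Fin 4) 1 ∈ S := by rwa [Equiv.swap_comm]
  have h31 : Equiv.swap (3 : Fin 4) 1 ∈ S := by rwa [Equiv.swap_comm]
  have h32 : Equiv.swap (3 : Fin 4) 2 ∈ S := by rwa [Equiv.swap_comm]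
  rintro τ ⟨i, j, hij, rfl⟩
  fin_cases i <;> fin_cases j <;>
    first
      | exact absurd rfl hij
      | assumption

lemma F_E_mem : F ![0,0,1,1] 1 ∈ L := F_E ▸ hEL

lemma conj_mem (σ : Equiv.Perm (Fin 4)) :
    F (fun i => ![0,0,1,1] (σ⁻¹ i)) 1 ∈ L := by
  have h := L.mul_mem (L.mul_mem (perm_mem σ) F_E_mem) (perm_mem σ⁻¹)
  rw [F_mul, F_mul] at h
  convert h using 2
  · funext i; simp
  · simp

lemma sum4_comp (w : Fin 4 → ZMod 2) (σ : Equiv.Perm (Fin 4)) :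
    w (σ 0) + w (σ 1) + w (σ 2) + w (σ 3) = w 0 + w 1 + w 2 + w 3 := by
  have h := Equiv.sum_comp σ w
  rw [Fin.sum_univ_four, Fin.sum_univ_four] at h
  exact h

lemma two_cases : ∀ a : ZMod 2, a = 0 ∨ a = 1 := by decide

lemma veven_mem (v : Fin 4 → ZMod 2) (hv : v 0 + v 1 + v 2 + v 3 = 0) :
    F v 1 ∈ L := by
  obtain ⟨a, b, c, d, rfl⟩ : ∃ a b c d, v = ![a, b, c, d] :=
    ⟨v 0, v 1, v 2, v 3, by funext i; fin_cases i <;> rfl⟩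
  simp only [Matrix.cons_val_zero, Matrix.cons_val_one, Matrix.head_cons,
    Matrix.cons_val_two, Matrix.tail_cons, Matrix.cons_val_three] at hv
  have h1100 : F ![1,1,0,0] 1 ∈ L := by
    have := conj_mem (Equiv.swap 0 2 * Equiv.swap 1 3)
    rwa [show (fun i : Fin 4 => (![0,0,1,1] : Fin 4 → ZMod 2) ((Equiv.swap (0:Fin 4) 2 * Equiv.swap 1 3 : Equiv.Perm (Fin 4))⁻¹ i)) = ![1,1,0,0] from by decide] at this
  rcases two_cases a with rfl | rfl <;> rcases two_cases b with rfl | rfl <;>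
    rcases two_cases c with rfl | rfl <;> rcases two_cases d with rfl | rfl <;>
    first
    | (exfalso; revert hv; decide)
    | (rw [show (![0,0,0,0] : Fin 4 → ZMod 2) = 0 from by decide, F_one]; exact L.one_mem)
    | exact F_E_mem
    | exact h1100
    | · have := conj_mem (Equiv.swap 1 2)
        rwa [show (fun i : Fin 4 => (![0,0,1,1] : Fin 4 → ZMod 2) ((Equiv.swap (1:Fin 4) 2 : Equiv.Perm (Fin 4))⁻¹ i)) = ![0,1,0,1] from by decide] at this
    | · have := conj_mem (Equiv.swap 1 3)
        rwa [show (fun i : Fin 4 => (![0,0,1,1] : Fin 4 → ZMod 2) ((Equiv.swap (1:Fin 4) 3 : Equiv.Perm (Fin 4))⁻¹ i)) = ![0,1,1,0] from by decide] at this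
    | · have := conj_mem (Equiv.swap 0 2)
        rwa [show (fun i : Fin 4 => (![0,0,1,1] : Fin 4 → ZMod 2) ((Equiv.swap (0:Fin 4) 2 : Equiv.Perm (Fin 4))⁻¹ i)) = ![1,0,0,1] from by decide] at this
    | · have := conj_mem (Equiv.swap 0 3)
        rwa [show (fun i : Fin 4 => (![0,0,1,1] : Fin 4 → ZMod 2) ((Equiv.swap (0:Fin 4) 3 : Equiv.Perm (Fin 4))⁻¹ i)) = ![1,0,1,0] from by decide] at this
    | · have := L.mul_mem F_E_mem h1100
        rw [F_mul] at this
        rwa [show ((![0,0,1,1] : Fin 4 → ZMod 2) + fun i => ![1,1,0,0] ((1 : Equiv.Perm (Fin 4))⁻¹ i))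
          = ![1,1,1,1] from by decide, one_mul] at this

def R : Subgroup (GL (Fin 4) ℚ) where
  carrier := {x | ∃ v σ, (v 0 + v 1 + v 2 + v 3 = 0) ∧ x = F v σ}
  one_mem' := ⟨0, 1, by simp, F_one.symm⟩
  mul_mem' := by
    rintro x y ⟨v, σ, hv, rfl⟩ ⟨w, τ, hw, rfl⟩
    refine ⟨v + fun i => w (σ⁻¹ i), σ * τ, ?_, (F_mul v w σ τ)⟩
    have h : (v + fun i => w (σ⁻¹ i)) 0 + (v + fun i => w (σ⁻¹ i)) 1
        + (v + fun i => w (σ⁻¹ i)) 2 + (v + fun i => w (σ⁻¹ i)) 3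
        = (v 0 + v 1 + v 2 + v 3) + (w (σ⁻¹ 0) + w (σ⁻¹ 1) + w (σ⁻¹ 2) + w (σ⁻¹ 3)) := by
      simp only [Pi.add_apply]; ring
    rw [h, hv, sum4_comp w σ⁻¹, hw, add_zero]
  inv_mem' := by
    rintro x ⟨v, σ, hv, rfl⟩
    refine ⟨fun i => v (σ i), σ⁻¹, ?_, F_inv v σ⟩
    rw [sum4_comp v σ, hv]

lemma L_le_R : L ≤ R := by
  rw [L, Subgroup.closure_le]
  rintro x (rfl | rfl | rfl | rfl)
  · exact ⟨0, Equiv.swap 2 3, by simp, F_D₁.symm⟩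
  · exact ⟨0, Equiv.swap 1 2, by simp, F_D₂.symm⟩
  · exact ⟨0, Equiv.swap 0 1 * Equiv.swap 2 3, by simp, F_M.symm⟩
  · exact ⟨![0,0,1,1], 1, by decide, F_E.symm⟩

lemma F_mem_L (v : Fin 4 → ZMod 2) (σ : Equiv.Perm (Fin 4))
    (hv : v 0 + v 1 + v 2 + v 3 = 0) : F v σ ∈ L := by
  have h : F v 1 * F 0 σ = F v σ := by
    rw [F_mul]; norm_num
    congr 1
    funext i
    simp
  rw [← h]
  exact L.mul_mem (veven_mem v hv) (perm_mem σ)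


def G : V × Equiv.Perm (Fin 4) → L :=
  fun p => ⟨F p.1.val p.2, F_mem_L p.1.val p.2 p.1.2⟩

lemma G_bij : Function.Bijective G := by
  constructor
  · rintro ⟨⟨v, hv⟩, σ⟩ ⟨⟨w, hw⟩, τ⟩ h
    have h' : F v σ = F w τ := congrArg Subtype.val h
    obtain ⟨h1, h2⟩ := F_inj h'
    simp only [Prod.mk.injEq, Subtype.mk.injEq]
    exact ⟨h1, h2⟩
  · rintro ⟨x, hx⟩
    obtain ⟨v, σ, hv, rfl⟩ := L_le_R hx
    exact ⟨⟨⟨v, hv⟩, σ⟩, rfl⟩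

lemma parity_comb (v w : Fin 4 → ZMod 2) (σ : Equiv.Perm (Fin 4))
    (hv : v 0 + v 1 + v 2 + v 3 = 0) (hw : w 0 + w 1 + w 2 + w 3 = 0) :
    (v + fun i => w (σ⁻¹ i)) 0 + (v + fun i => w (σ⁻¹ i)) 1
      + (v + fun i => w (σ⁻¹ i)) 2 + (v + fun i => w (σ⁻¹ i)) 3 = 0 := by
  have h : (v + fun i => w (σ⁻¹ i)) 0 + (v + fun i => w (σ⁻¹ i)) 1
      + (v + fun i => w (σ⁻¹ i)) 2 + (v + fun i => w (σ⁻¹ i)) 3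
      = (v 0 + v 1 + v 2 + v 3) + (w (σ⁻¹ 0) + w (σ⁻¹ 1) + w (σ⁻¹ 2) + w (σ⁻¹ 3)) := by
    simp only [Pi.add_apply]; ring
  rw [h, hv, sum4_comp w σ⁻¹, hw, add_zero]


/-- `L` is isomorphic to the semidirect product `V ⋊ S₄`, where `S₄` acts on `V` by
permuting coordinates: there is a bijection `e : L ≃ V × S₄` carrying the group law of
`L` to the semidirect-product law `(v,σ)·(w,τ) = (v + σ•w, σ·τ)` with `(σ•w) i = w (σ⁻¹ i)`. -/
theorem toricCode_logical_operators_semidirect :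
    ∃ e : L ≃ (V × Equiv.Perm (Fin 4)),
      ∀ x y : L,
        ((e (x * y)).1.val =
          (e x).1.val + fun i => (e y).1.val (((e x).2)⁻¹ i)) ∧
        (e (x * y)).2 = (e x).2 * (e y).2 := by
  refine ⟨(Equiv.ofBijective G G_bij).symm, fun x y => ?_⟩
  set a := (Equiv.ofBijective G G_bij).symm x with ha
  set b := (Equiv.ofBijective G G_bij).symm y with hb
  have hx : G a = x := Equiv.ofBijective_apply_symm_apply G G_bij x
  have hy : G b = y := Equiv.ofBijective_apply_symm_apply G G_bij y
  have hxy : x * y = G ⟨⟨a.1.val + fun i => b.1.val (a.2⁻¹ i),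
      parity_comb a.1.val b.1.val a.2 a.1.2 b.1.2⟩, a.2 * b.2⟩ := by
    apply Subtype.ext
    show (x : GL (Fin 4) ℚ) * y = F _ _
    rw [← hx, ← hy]
    show F a.1.val a.2 * F b.1.val b.2 = _
    rw [F_mul]
  have key : (Equiv.ofBijective G G_bij).symm (x * y) = ⟨⟨a.1.val + fun i => b.1.val (a.2⁻¹ i),
      parity_comb a.1.val b.1.val a.2 a.1.2 b.1.2⟩, a.2 * b.2⟩ := by
    rw [hxy]
    exact Equiv.ofBijective_symm_apply_apply G G_bij _
  rw [key]
  exact ⟨rfl, rfl⟩
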